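/- Let M : ℝ^r → ℝ^r satisfy ‖M(x)‖ ≤ a‖x‖ + b for all x, with 0 < a < 1 and b ∈ ℝ. Let e be a random vector with E‖e‖^κ < ∞ for some κ ≥ 2. Define ψ(x) = 1 + ‖x‖^κ. Then there exist ε ∈ (0,1), L > 0, and M₀ < ∞ such that E[ψ(M(x) + e)] ≤ (1 - ε)ψ(x) whenever ‖x‖ > L, and E[ψ(M(x) + e)] ≤ M₀ whenever ‖x‖ ≤ L. -/

import Mathlib

open MeasureTheory

private lemma split_rpow {u v θ κ : ℝ} (hu : 0 ≤ u) (hv : 0 ≤ v) (hθ : 1 < θ)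
    (hκ : 0 ≤ κ) : (u + v) ^ κ ≤ (θ * u) ^ κ + (θ / (θ - 1) * v) ^ κ := by
  have hθ0 : 0 < θ - 1 := by linarith
  have hc0 : 0 ≤ θ / (θ - 1) := by positivity
  rcases le_or_gt v ((θ - 1) * u) with h | h
  · have h1 : u + v ≤ θ * u := by nlinarith
    have h2 := Real.rpow_le_rpow (by positivity) h1 hκ
    have h3 : 0 ≤ (θ / (θ - 1) * v) ^ κ := Real.rpow_nonneg (by positivity) _
    linarith
  · have h1 : u + v ≤ θ / (θ - 1) * v := by
      rw [div_mul_eq_mul_div, le_div_iff₀ hθ0]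
      nlinarith
    have h2 := Real.rpow_le_rpow (by positivity) h1 hκ
    have h3 : 0 ≤ (θ * u) ^ κ := Real.rpow_nonneg (by positivity) _
    linarith

/-- drift criterion. If `‖M(x)‖ ≤ a‖x‖ + b` with `0 < a < 1` and the noise
`e` has finite `κ`-th moment (`κ ≥ 2`), then the test function `ψ(x) = 1 + ‖x‖^κ`
satisfies a geometric drift condition outside a ball and is bounded on the ball. -/
theorem drift_criterion {r : ℕ} {Ω : Type*} [MeasurableSpace Ω]
    (μ : Measure Ω) [IsProbabilityMeasure μ]
    (M : (Fin r → ℝ) → (Fin r → ℝ)) (a b : ℝ) (ha0 : 0 < a) (ha1 : a < 1)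
    (hM : ∀ x, ‖M x‖ ≤ a * ‖x‖ + b)
    (e : Ω → (Fin r → ℝ)) (he : Measurable e)
    (κ : ℝ) (hκ : 2 ≤ κ) (hmom : Integrable (fun ω => ‖e ω‖ ^ κ) μ) :
    ∃ ε : ℝ, 0 < ε ∧ ε < 1 ∧ ∃ L : ℝ, 0 < L ∧ ∃ M₀ : ℝ, ∀ x : Fin r → ℝ,
      (L < ‖x‖ → ∫ ω, (1 + ‖M x + e ω‖ ^ κ) ∂μ ≤ (1 - ε) * (1 + ‖x‖ ^ κ)) ∧
      (‖x‖ ≤ L → ∫ ω, (1 + ‖M x + e ω‖ ^ κ) ∂μ ≤ M₀) := by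
  have hκ0 : (0:ℝ) ≤ κ := by linarith
  set θ : ℝ := a ^ (-(1/4) : ℝ) with hθdef
  have hθpos : 0 < θ := Real.rpow_pos_of_pos ha0 _
  have hθ1 : 1 < θ := by
    rw [hθdef]
    exact (Real.one_lt_rpow_iff_of_pos ha0).2 (Or.inr ⟨ha1, by norm_num⟩)
  have hθa : θ * θ * a = a ^ ((1:ℝ)/2) := by
    have h : θ * θ * a = a ^ (-(1/4) : ℝ) * a ^ (-(1/4) : ℝ) * a ^ (1:ℝ) := by
      rw [Real.rpow_one, hθdef]
    rw [h, ← Real.rpow_add ha0, ← Real.rpow_add ha0]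
    norm_num
  set ρ : ℝ := (θ * θ * a) ^ κ with hρdef
  have hθθa : 0 < θ * θ * a := by positivity
  have hρpos : 0 < ρ := Real.rpow_pos_of_pos hθθa _
  have hρ1 : ρ < 1 := by
    have h : ρ = a ^ ((1:ℝ)/2 * κ) := by
      rw [hρdef, hθa, Real.rpow_mul ha0.le]
    rw [h]
    exact Real.rpow_lt_one ha0.le ha1 (by linarith)
  set c : ℝ := θ / (θ - 1) with hcdef
  have hc0 : 0 < c := by
    apply div_pos hθpos; linarith
  set bp : ℝ := max b 0 with hbpdef
  have hbp0 : 0 ≤ bp := le_max_right _ _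
  set K : ℝ := (c * (θ * bp)) ^ κ with hKdef
  have hK0 : 0 ≤ K := Real.rpow_nonneg (by positivity) _
  set Cc : ℝ := c ^ κ with hCcdef
  have hCc0 : 0 ≤ Cc := Real.rpow_nonneg hc0.le _
  set C : ℝ := ∫ ω, ‖e ω‖ ^ κ ∂μ with hCdef
  have hC0 : 0 ≤ C := integral_nonneg fun ω => Real.rpow_nonneg (norm_nonneg _) _
  set D : ℝ := K + Cc * C with hDdef
  have hD0 : 0 ≤ D := by positivity
  -- pointwise bound
  have hptwise : ∀ (x : Fin r → ℝ) (ω : Ω),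
      1 + ‖M x + e ω‖ ^ κ ≤ (1 + ρ * ‖x‖ ^ κ + K) + Cc * ‖e ω‖ ^ κ := by
    intro x ω
    have hu0 : 0 ≤ a * ‖x‖ + b := le_trans (norm_nonneg _) (hM x)
    have h1 : ‖M x + e ω‖ ≤ (a * ‖x‖ + b) + ‖e ω‖ :=
      le_trans (norm_add_le _ _) (by linarith [hM x])
    have h2 : ‖M x + e ω‖ ^ κ ≤ ((a * ‖x‖ + b) + ‖e ω‖) ^ κ :=
      Real.rpow_le_rpow (norm_nonneg _) h1 hκ0
    have h3 : ((a * ‖x‖ + b) + ‖e ω‖) ^ κ ≤ (θ * (a * ‖x‖ + b)) ^ κ + (c * ‖e ω‖) ^ κ :=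
      split_rpow hu0 (norm_nonneg _) hθ1 hκ0
    have h4 : (θ * (a * ‖x‖ + b)) ^ κ ≤ (θ * (a * ‖x‖) + θ * bp) ^ κ := by
      apply Real.rpow_le_rpow (by positivity) _ hκ0
      have : b ≤ bp := le_max_left _ _
      nlinarith [norm_nonneg x]
    have h5 : (θ * (a * ‖x‖) + θ * bp) ^ κ ≤ (θ * (θ * (a * ‖x‖))) ^ κ + (c * (θ * bp)) ^ κ :=
      split_rpow (by positivity) (by positivity) hθ1 hκ0
    have h6 : (θ * (θ * (a * ‖x‖))) ^ κ = ρ * ‖x‖ ^ κ := by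
      rw [show θ * (θ * (a * ‖x‖)) = (θ * θ * a) * ‖x‖ from by ring,
        Real.mul_rpow hθθa.le (norm_nonneg _)]
    have h7 : (c * ‖e ω‖) ^ κ = Cc * ‖e ω‖ ^ κ :=
      Real.mul_rpow hc0.le (norm_nonneg _)
    rw [h6] at h5
    rw [h7] at h3
    linarith
  -- integral bound
  have hint : ∀ x : Fin r → ℝ,
      ∫ ω, (1 + ‖M x + e ω‖ ^ κ) ∂μ ≤ 1 + ρ * ‖x‖ ^ κ + D := by
    intro x
    have hgint : Integrable (fun ω => (1 + ρ * ‖x‖ ^ κ + K) + Cc * ‖e ω‖ ^ κ) μ :=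
      (integrable_const _).add (hmom.const_mul _)
    calc ∫ ω, (1 + ‖M x + e ω‖ ^ κ) ∂μ
        ≤ ∫ ω, ((1 + ρ * ‖x‖ ^ κ + K) + Cc * ‖e ω‖ ^ κ) ∂μ := by
          apply integral_mono_of_nonneg
          · exact Filter.Eventually.of_forall fun ω => by positivity
          · exact hgint
          · exact Filter.Eventually.of_forall fun ω => hptwise x ω
      _ = (1 + ρ * ‖x‖ ^ κ + K) + Cc * C := by
          rw [integral_add (integrable_const _) (hmom.const_mul _), integral_const,
            integral_const_mul]
          simp [hCdef]
      _ = 1 + ρ * ‖x‖ ^ κ + D := by rw [hDdef]; ring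
  -- choose constants
  set ε : ℝ := (1 - ρ)/2 with hεdef
  have hε : 0 < ε := by rw [hεdef]; linarith
  set L : ℝ := max 1 (1 + D / ε) with hLdef
  have hL1 : (1:ℝ) ≤ L := le_max_left _ _
  set M₀ : ℝ := 1 + ρ * L ^ κ + D with hM₀def
  have hLD : 1 + D / ε ≤ L := le_max_right _ _
  clear_value M₀ L ε D C Cc K bp c ρ θ
  refine ⟨ε, hε, by rw [hεdef]; linarith, L, by linarith, M₀, fun x => ⟨?_, ?_⟩⟩
  · intro hx
    have hx1 : 1 ≤ ‖x‖ := le_trans hL1 hx.le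
    have hxD : 1 + D / ε < ‖x‖ := lt_of_le_of_lt hLD hx
    have ht : ‖x‖ ≤ ‖x‖ ^ κ := by
      nth_rewrite 1 [show ‖x‖ = ‖x‖ ^ (1:ℝ) from (Real.rpow_one _).symm]
      exact Real.rpow_le_rpow_of_exponent_le hx1 (by linarith)
    have htD : 1 + D / ε < ‖x‖ ^ κ := lt_of_lt_of_le hxD ht
    have hεtD : ε + D < ε * ‖x‖ ^ κ := by
      have h := (div_lt_iff₀ hε).mp (by linarith : D / ε < ‖x‖ ^ κ - 1)
      have h' : (‖x‖ ^ κ - 1) * ε = ε * ‖x‖ ^ κ - ε := by ring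
      linarith
    have hi := hint x
    have hρε : ρ = 1 - 2 * ε := by rw [hεdef]; ring
    rw [hρε] at hi
    have hgoal : 1 + (1 - 2 * ε) * ‖x‖ ^ κ + D ≤ (1 - ε) * (1 + ‖x‖ ^ κ) := by
      have h' : (1 - ε) * (1 + ‖x‖ ^ κ) = 1 + ‖x‖ ^ κ - ε - ε * ‖x‖ ^ κ := by ring
      have h'' : (1 - 2 * ε) * ‖x‖ ^ κ = ‖x‖ ^ κ - 2 * (ε * ‖x‖ ^ κ) := by ring
      linarith
    linarith
  · intro hx
    have ht : ‖x‖ ^ κ ≤ L ^ κ := Real.rpow_le_rpow (norm_nonneg _) hx hκ0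
    have hi := hint x
    have h2 := mul_le_mul_of_nonneg_left ht hρpos.le
    rw [hM₀def]
    linarith
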